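/- arXiv:0809.3097 — 2 statements merged into one kernel-verified Lean document; each statement's English description precedes it below -/
import Mathlib

section
/- Properties of the twisted Haar functions. Let μ be a Borel measure on ℝ^N finite on cubes, Q an axis-parallel cube with dyadic children enumerated Q_1,…,Q_{2^N}, and set Q̂_k := ∪_{j=k}^{2^N} Q_j. Let b be a measurable function with ‖b‖_{L^∞(μ)} ≤ 1, and write b(A) := ∫_A b dμ, for some δ > 0 assume μ(Q_u) > 0, |b(Q_u)| ≥ δ μ(Q_u), and |b(Q̂_u)| ≥ 2^{−N} δ μ(Q) and |b(Q̂_{u+1})| ≥ 2^{−N} δ μ(Q), where 1 ≤ u ≤ 2^N − 1 is fixed. Define φ := c·(1_{Q_u}/b(Q_u) − 1_{Q̂_{u+1}}/b(Q̂_{u+1})) where c is any complex square root of b(Q_u)·b(Q̂_{u+1})/b(Q̂_u). Then: (i) ∫ b φ dμ = 0; (ii) there exist constants 0 < c₁ ≤ c₂ < ∞ depending only on δ and N such that c₁ √(μ(Q_u)) (1_{Q_u}/μ(Q_u) + 1_{Q̂_{u+1}}/μ(Q)) ≤ |φ| ≤ c₂ √(μ(Q_u)) (1_{Q_u}/μ(Q_u)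 + 1_{Q̂_{u+1}}/μ(Q)) pointwise; (iii) for every p ∈ [1,∞], c₁' μ(Q_u)^{1/p−1/2} ≤ ‖φ‖_{L^p(μ)} ≤ c₂' μ(Q_u)^{1/p−1/2} with c₁', c₂' depending only on δ and N; and (iv) ‖φ‖_{L¹(μ)}·‖φ‖_{L^∞(μ)} ≤ C(δ,N). -/
open MeasureTheory ENNReal

noncomputable section

/-- Euclidean space `ℝ^N`. -/
abbrev RN (N : ℕ) := EuclideanSpace ℝ (Fin N)

/-- The axis-parallel (half-open) cube with centre `c` and side-length `l`. -/
def cube {N : ℕ} (c : RN N) (l : ℝ) : Set (RN N) :=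
  {x | ∀ i, c i - l / 2 ≤ x i ∧ x i < c i + l / 2}

/-- The dyadic child of the cube with centre `c` and side-length `l` selected by
`s : Fin N → Bool`. -/
def childCube {N : ℕ} (c : RN N) (l : ℝ) (s : Fin N → Bool) : Set (RN N) :=
  cube (WithLp.toLp 2 (fun i => c i + (if s i then l / 4 else -(l / 4)) : Fin N → ℝ)) (l / 2)

/-- `Q̂_k = ∪_{j≥k} Q_j`: the union of the children with index at least `k` in the
enumeration `e` (zero-based). -/
def unionFrom {N : ℕ} (c : RN N) (l : ℝ) (e : Fin (2 ^ N) → (Fin N → Bool))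
    (k : ℕ) : Set (RN N) :=
  ⋃ j ∈ {j : Fin (2 ^ N) | k ≤ (j : ℕ)}, childCube c l (e j)

lemma measurableSet_cube {N : ℕ} (c : RN N) (l : ℝ) : MeasurableSet (cube c l) := by
  have h : cube c l = ⋂ i, (fun x : RN N => x i) ⁻¹' (Set.Ico (c i - l/2) (c i + l/2)) := by
    ext x; simp [cube, Set.mem_Ico]
  rw [h]
  exact MeasurableSet.iInter fun i => measurableSet_Ico.preimage (by fun_prop)

lemma measurableSet_childCube {N : ℕ} (c : RN N) (l : ℝ) (s : Fin N → Bool) :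
    MeasurableSet (childCube c l s) := measurableSet_cube _ _

lemma measurableSet_unionFrom {N : ℕ} (c : RN N) (l : ℝ) (e : Fin (2 ^ N) → (Fin N → Bool))
    (k : ℕ) : MeasurableSet (unionFrom c l e k) :=
  MeasurableSet.biUnion (Set.to_countable _) fun _ _ => measurableSet_childCube _ _ _

lemma childCube_subset {N : ℕ} (c : RN N) {l : ℝ} (hl : 0 < l) (s : Fin N → Bool) :
    childCube c l s ⊆ cube c l := by
  intro x hx i
  have h := hx i
  dsimp only at h
  by_cases hsi : s i <;> simp [hsi] at h <;> constructor <;> linarith [h.1, h.2]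

lemma childCube_disjoint {N : ℕ} (c : RN N) (l : ℝ) {s t : Fin N → Bool} (hst : s ≠ t) :
    childCube c l s ∩ childCube c l t = ∅ := by
  ext x
  simp only [Set.mem_inter_iff, Set.mem_empty_iff_false, iff_false]
  rintro ⟨hs, ht⟩
  obtain ⟨i, hi⟩ := Function.ne_iff.mp hst
  have h1 := hs i; have h2 := ht i
  dsimp only at h1 h2
  cases hsi : s i <;> cases hti : t i
  · exact hi (by rw [hsi, hti])
  · rw [hsi] at h1; rw [hti] at h2
    norm_num at h1 h2
    linarith [h1.2, h2.1]
  · rw [hsi] at h1; rw [hti] at h2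
    norm_num at h1 h2
    linarith [h1.1, h2.2]
  · exact hi (by rw [hsi, hti])

lemma unionFrom_subset {N : ℕ} (c : RN N) {l : ℝ} (hl : 0 < l)
    (e : Fin (2 ^ N) → (Fin N → Bool)) (k : ℕ) : unionFrom c l e k ⊆ cube c l :=
  Set.iUnion₂_subset fun j _ => childCube_subset c hl _

lemma childCube_disjoint_unionFrom {N : ℕ} (c : RN N) (l : ℝ)
    (e : Fin (2 ^ N) ≃ (Fin N → Bool)) (u : Fin (2 ^ N)) :
    childCube c l (e u) ∩ unionFrom c l e ((u : ℕ) + 1) = ∅ := by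
  ext x
  simp only [Set.mem_inter_iff, Set.mem_empty_iff_false, iff_false, unionFrom,
    Set.mem_iUnion, Set.mem_setOf_eq, exists_prop]
  rintro ⟨h1, j, hj, h2⟩
  have hne : e u ≠ e j := by
    intro h
    have := e.injective h
    omega
  have := childCube_disjoint c l hne
  exact absurd (Set.mem_inter h1 h2) (by rw [this]; exact Set.notMem_empty x)

/-- generic sandwich for `cn * t⁻¹`. -/
lemma div_sandwich {A B cn t tl tu : ℝ} (hA : 0 ≤ A) (htl : 0 < tl)
    (hcl : A ≤ cn) (hcu : cn ≤ B) (h1 : tl ≤ t) (h2 : t ≤ tu) :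
    A * tu⁻¹ ≤ cn * t⁻¹ ∧ cn * t⁻¹ ≤ B * tl⁻¹ := by
  have ht : 0 < t := lt_of_lt_of_le htl h1
  have htu : 0 < tu := lt_of_lt_of_le ht h2
  constructor
  · exact mul_le_mul hcl (inv_anti₀ ht h2) (inv_nonneg.2 htu.le) (hA.trans hcl)
  · exact mul_le_mul hcu (inv_anti₀ htl h1) (inv_nonneg.2 ht.le)
      ((hA.trans hcl).trans hcu)

lemma rpow_aux1 {m : ℝ} (hm : 0 < m) (r : ℝ) :
    Real.sqrt m * m⁻¹ * m ^ r = m ^ (r - 2⁻¹) := by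
  rw [Real.sqrt_eq_rpow, ← Real.rpow_neg_one m, ← Real.rpow_add hm, ← Real.rpow_add hm]
  congr 1; ring

lemma rpow_aux2 {m : ℝ} (hm : 0 < m) (r : ℝ) :
    Real.sqrt m * m ^ (r - 1) = m ^ (r - 2⁻¹) := by
  rw [Real.sqrt_eq_rpow, ← Real.rpow_add hm]
  congr 1; ring

lemma rpow_aux3 {M : ℝ} (hM : 0 < M) (r : ℝ) :
    M⁻¹ * M ^ r = M ^ (r - 1) := by
  rw [← Real.rpow_neg_one M, ← Real.rpow_add hM]
  congr 1; ring

lemma elp_ind {α : Type*} [MeasurableSpace α] (μ : Measure α) {s : Set α} (hs : MeasurableSet s)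
    (hs0 : μ s ≠ 0) (hfin : μ s ≠ ∞) {a : ℝ} (ha : 0 ≤ a) {pp : ℝ≥0∞} (hpp : pp ≠ 0) :
    eLpNorm (s.indicator (fun _ => a)) pp μ
      = ENNReal.ofReal (a * (μ s).toReal ^ (1 / pp.toReal)) := by
  rw [eLpNorm_indicator_const' hs hs0 hpp, Real.enorm_eq_ofReal ha, ENNReal.ofReal_mul ha,
    ← ENNReal.ofReal_rpow_of_pos (ENNReal.toReal_pos hs0 hfin), ENNReal.ofReal_toReal hfin]

set_option maxHeartbeats 1000000 in
/-- **Properties of the twisted Haar functions.** -/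
theorem twisted_Haar_function_properties (N : ℕ) (hN : 0 < N) (δ : ℝ) (hδ : 0 < δ) :
    ∃ c₁ c₂ c₁' c₂' C : ℝ, 0 < c₁ ∧ c₁ ≤ c₂ ∧ 0 < c₁' ∧ c₁' ≤ c₂' ∧ 0 < C ∧
      ∀ (μ : Measure (RN N)), (∀ (c : RN N) (l : ℝ), μ (cube c l) < ∞) →
      ∀ (c : RN N) (l : ℝ), 0 < l →
      ∀ e : Fin (2 ^ N) ≃ (Fin N → Bool),
      ∀ u : Fin (2 ^ N), (u : ℕ) + 1 < 2 ^ N →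
      ∀ b : RN N → ℂ, Measurable b → (∀ᵐ x ∂μ, ‖b x‖ ≤ 1) →
        IntegrableOn b (cube c l) μ →
      ∀ Qu Qh Qh1 : Set (RN N),
        Qu = childCube c l (e u) → Qh = unionFrom c l e u →
        Qh1 = unionFrom c l e ((u : ℕ) + 1) →
      ∀ bQu bQh bQh1 : ℂ,
        bQu = ∫ x in Qu, b x ∂μ → bQh = ∫ x in Qh, b x ∂μ → bQh1 = ∫ x in Qh1, b x ∂μ →
        0 < μ Qu →
        δ * (μ Qu).toReal ≤ ‖bQu‖ →
        ((2 : ℝ) ^ N)⁻¹ * δ * (μ (cube c l)).toReal ≤ ‖bQh‖ →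
        ((2 : ℝ) ^ N)⁻¹ * δ * (μ (cube c l)).toReal ≤ ‖bQh1‖ →
      ∀ cc : ℂ, cc ^ 2 = bQu * bQh1 / bQh →
      ∀ φ : RN N → ℂ,
        (φ = fun x => cc * (Qu.indicator (fun _ => (1 : ℂ)) x * bQu⁻¹
          - Qh1.indicator (fun _ => (1 : ℂ)) x * bQh1⁻¹)) →
        -- (i) `∫ b φ dμ = 0`
        ((∫ x, b x * φ x ∂μ) = 0) ∧
        -- (ii) pointwise two-sided comparison
        (∀ x : RN N,
          c₁ * Real.sqrt (μ Qu).toReal *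
              (Qu.indicator (fun _ => ((μ Qu).toReal)⁻¹) x
                + Qh1.indicator (fun _ => ((μ (cube c l)).toReal)⁻¹) x) ≤ ‖φ x‖ ∧
          ‖φ x‖ ≤ c₂ * Real.sqrt (μ Qu).toReal *
              (Qu.indicator (fun _ => ((μ Qu).toReal)⁻¹) x
                + Qh1.indicator (fun _ => ((μ (cube c l)).toReal)⁻¹) x)) ∧
        -- (iii) `‖φ‖_{L^p(μ)} ≍ μ(Q_u)^{1/p − 1/2}` for all `p ∈ [1,∞]`
        (∀ pp : ℝ≥0∞, 1 ≤ pp →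
          ENNReal.ofReal (c₁' * (μ Qu).toReal ^ ((1 / pp).toReal - (2 : ℝ)⁻¹)) ≤
              eLpNorm φ pp μ ∧
            eLpNorm φ pp μ ≤
              ENNReal.ofReal (c₂' * (μ Qu).toReal ^ ((1 / pp).toReal - (2 : ℝ)⁻¹))) ∧
        -- (iv) `‖φ‖_{L¹(μ)} ‖φ‖_{L^∞(μ)} ≤ C(δ,N)`
        eLpNorm φ 1 μ * eLpNorm φ ∞ μ ≤ ENNReal.ofReal C := by
  set K : ℝ := (2:ℝ)^N with hKdef
  have hKpos : (0:ℝ) < K := by positivity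
  have hK1 : (1:ℝ) ≤ K := one_le_pow₀ (by norm_num)
  have hK2 : K ≤ K^2 := by nlinarith
  set c₁ : ℝ := δ * K⁻¹ with hc₁
  set c₂ : ℝ := K^2 * δ⁻¹ * δ⁻¹ + δ with hc₂
  have hc₁pos : 0 < c₁ := by positivity
  have hc₂pos : 0 < c₂ := by positivity
  have hc₁₂ : c₁ ≤ c₂ := by
    have h1 : c₁ ≤ δ := by
      rw [hc₁]
      exact mul_le_of_le_one_right hδ.le (inv_le_one_of_one_le₀ hK1)
    have h2 : 0 ≤ K^2 * δ⁻¹ * δ⁻¹ := by positivity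
    rw [hc₂]; linarith
  refine ⟨c₁, c₂, c₁, 2 * c₂, (2 * c₂)^2, hc₁pos, hc₁₂, hc₁pos, by linarith, by positivity, ?_⟩
  intro μ hμfin c l hl e u hu b hbmeas hb1 hbint Qu Qh Qh1 hQu hQh hQh1 bQu bQh bQh1
    hbQu hbQh hbQh1 hμQu hlbu hlbh hlbh1 cc hcc φ hφ
  -- basic set facts
  have hQu_meas : MeasurableSet Qu := hQu ▸ measurableSet_childCube c l (e u)
  have hQh1_meas : MeasurableSet Qh1 := hQh1 ▸ measurableSet_unionFrom c l e _
  have hQu_sub : Qu ⊆ cube c l := hQu ▸ childCube_subset c hl _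
  have hQh_sub : Qh ⊆ cube c l := hQh ▸ unionFrom_subset c hl e _
  have hQh1_sub : Qh1 ⊆ cube c l := hQh1 ▸ unionFrom_subset c hl e _
  have hdisj : Disjoint Qu Qh1 := Set.disjoint_iff_inter_eq_empty.mpr
    (by rw [hQu, hQh1]; exact childCube_disjoint_unionFrom c l e u)
  -- measures
  set m : ℝ := (μ Qu).toReal with hmdef
  set M : ℝ := (μ (cube c l)).toReal with hMdef
  have hQfin : μ (cube c l) ≠ ∞ := (hμfin c l).ne
  have hQufin : μ Qu ≠ ∞ := (lt_of_le_of_lt (measure_mono hQu_sub) (hμfin c l)).ne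
  have hQh1fin : μ Qh1 ≠ ∞ := (lt_of_le_of_lt (measure_mono hQh1_sub) (hμfin c l)).ne
  have hm : 0 < m := ENNReal.toReal_pos hμQu.ne' hQufin
  have hM : 0 < M := by
    have h0 : (0:ℝ≥0∞) < μ (cube c l) := lt_of_lt_of_le hμQu (measure_mono hQu_sub)
    exact ENNReal.toReal_pos h0.ne' hQfin
  have hmM : m ≤ M := ENNReal.toReal_mono hQfin (measure_mono hQu_sub)
  -- integral norm upper bounds
  have hb_bound : ∀ s : Set (RN N), s ⊆ cube c l → ‖∫ x in s, b x ∂μ‖ ≤ (μ s).toReal := by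
    intro s hs
    have := norm_setIntegral_le_of_norm_le_const_ae (C := 1)
      (lt_of_le_of_lt (measure_mono hs) (hμfin c l)) (ae_restrict_of_ae hb1)
    simpa [measureReal_def] using this
  have hbu_u : ‖bQu‖ ≤ m := hbQu ▸ hb_bound Qu hQu_sub
  have hbh_u : ‖bQh‖ ≤ M := le_trans (hbQh ▸ hb_bound Qh hQh_sub)
    (ENNReal.toReal_mono hQfin (measure_mono hQh_sub))
  have hbh1_u' : ‖bQh1‖ ≤ (μ Qh1).toReal := hbQh1 ▸ hb_bound Qh1 hQh1_sub
  have hbh1_u : ‖bQh1‖ ≤ M := le_trans hbh1_u'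
    (ENNReal.toReal_mono hQfin (measure_mono hQh1_sub))
  have hδ1 : δ ≤ 1 := by nlinarith
  have hbu_pos : 0 < ‖bQu‖ := lt_of_lt_of_le (by positivity) hlbu
  have hbh_pos : 0 < ‖bQh‖ := lt_of_lt_of_le (by positivity) hlbh
  have hbh1_pos : 0 < ‖bQh1‖ := lt_of_lt_of_le (by positivity) hlbh1
  have hbu_ne : bQu ≠ 0 := norm_pos_iff.mp hbu_pos
  have hbh1_ne : bQh1 ≠ 0 := norm_pos_iff.mp hbh1_pos
  have hμQh1_ne0 : μ Qh1 ≠ 0 := by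
    intro h
    rw [h] at hbh1_u'
    simp only [ENNReal.toReal_zero] at hbh1_u'
    linarith
  -- norm of cc
  have hccsq : ‖cc‖^2 = ‖bQu‖ * ‖bQh1‖ / ‖bQh‖ := by
    rw [← norm_pow, hcc, norm_div, norm_mul]
  have hcc_l : c₁ * Real.sqrt m ≤ ‖cc‖ := by
    have key : (c₁ * Real.sqrt m)^2 ≤ ‖cc‖^2 := by
      have e1 : δ * m * (K⁻¹ * δ * M) / M ≤ ‖bQu‖ * ‖bQh1‖ / ‖bQh‖ :=
        div_le_div₀ (by positivity)
          (mul_le_mul hlbu hlbh1 (by positivity) hbu_pos.le) hbh_pos hbh_u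
      have e2 : δ * m * (K⁻¹ * δ * M) / M = δ^2 * K⁻¹ * m := by field_simp
      have e3 : (c₁ * Real.sqrt m)^2 = δ^2 * K⁻¹ * K⁻¹ * m := by
        rw [hc₁, mul_pow, mul_pow, Real.sq_sqrt hm.le]; ring
      have e4 : δ^2 * K⁻¹ * K⁻¹ * m ≤ δ^2 * K⁻¹ * m := by
        have hKi : K⁻¹ ≤ 1 := inv_le_one_of_one_le₀ hK1
        nlinarith [mul_nonneg (mul_nonneg (sq_nonneg δ) (inv_nonneg.2 hKpos.le)) hm.le]
      rw [hccsq, e3]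
      calc δ^2 * K⁻¹ * K⁻¹ * m ≤ δ^2 * K⁻¹ * m := e4
        _ = δ * m * (K⁻¹ * δ * M) / M := e2.symm
        _ ≤ ‖bQu‖ * ‖bQh1‖ / ‖bQh‖ := e1
    have := Real.sqrt_le_sqrt key
    rwa [Real.sqrt_sq (by positivity), Real.sqrt_sq (norm_nonneg cc)] at this
  have hcc_u : ‖cc‖ ≤ K * δ⁻¹ * Real.sqrt m := by
    have key : ‖cc‖^2 ≤ (K * δ⁻¹ * Real.sqrt m)^2 := by
      have e1 : ‖bQu‖ * ‖bQh1‖ / ‖bQh‖ ≤ m * M / (K⁻¹ * δ * M) :=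
        div_le_div₀ (by positivity) (mul_le_mul hbu_u hbh1_u hbh1_pos.le hm.le)
          (by positivity) hlbh
      have e2 : m * M / (K⁻¹ * δ * M) = K * δ⁻¹ * m := by field_simp
      have e3 : (K * δ⁻¹ * Real.sqrt m)^2 = K^2 * δ⁻¹ * δ⁻¹ * m := by
        rw [mul_pow, mul_pow, Real.sq_sqrt hm.le]; ring
      have hKd : 1 ≤ K * δ⁻¹ := by
        have : 1 ≤ δ⁻¹ := (one_le_inv₀ hδ).mpr hδ1
        nlinarith
      have e4 : K * δ⁻¹ * m ≤ K^2 * δ⁻¹ * δ⁻¹ * m := by nlinarith [hm.le]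
      rw [hccsq, e3]
      calc ‖bQu‖ * ‖bQh1‖ / ‖bQh‖ ≤ m * M / (K⁻¹ * δ * M) := e1
        _ = K * δ⁻¹ * m := e2
        _ ≤ K^2 * δ⁻¹ * δ⁻¹ * m := e4
    have := Real.sqrt_le_sqrt key
    rwa [Real.sqrt_sq (norm_nonneg cc), Real.sqrt_sq (by positivity)] at this
  -- sandwich on Qu and Qh1
  obtain ⟨hvU_l, hvU_u'⟩ := div_sandwich (A := c₁ * Real.sqrt m) (B := K * δ⁻¹ * Real.sqrt m)
    (by positivity) (show (0:ℝ) < δ * m by positivity) hcc_l hcc_u hlbu hbu_u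
  obtain ⟨hvH_l, hvH_u'⟩ := div_sandwich (A := c₁ * Real.sqrt m) (B := K * δ⁻¹ * Real.sqrt m)
    (by positivity) (show (0:ℝ) < K⁻¹ * δ * M by positivity) hcc_l hcc_u hlbh1 hbh1_u
  have hvU_u : ‖cc‖ * ‖bQu‖⁻¹ ≤ c₂ * Real.sqrt m * m⁻¹ := by
    refine hvU_u'.trans ?_
    have h1 : K * δ⁻¹ * Real.sqrt m * (δ * m)⁻¹
        = (K * δ⁻¹ * δ⁻¹) * (Real.sqrt m * m⁻¹) := by
      rw [mul_inv]; ring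
    have h2 : K * δ⁻¹ * δ⁻¹ ≤ c₂ := by
      rw [hc₂]
      nlinarith [mul_nonneg (mul_nonneg (sub_nonneg.2 hK2) (inv_nonneg.2 hδ.le))
        (inv_nonneg.2 hδ.le)]
    rw [h1]
    calc (K * δ⁻¹ * δ⁻¹) * (Real.sqrt m * m⁻¹) ≤ c₂ * (Real.sqrt m * m⁻¹) :=
          mul_le_mul_of_nonneg_right h2 (by positivity)
      _ = c₂ * Real.sqrt m * m⁻¹ := by ring
  have hvH_u : ‖cc‖ * ‖bQh1‖⁻¹ ≤ c₂ * Real.sqrt m * M⁻¹ := by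
    refine hvH_u'.trans ?_
    have h1 : K * δ⁻¹ * Real.sqrt m * (K⁻¹ * δ * M)⁻¹
        = (K^2 * δ⁻¹ * δ⁻¹) * (Real.sqrt m * M⁻¹) := by
      rw [mul_inv, mul_inv, inv_inv]
      field_simp
    have h2 : K^2 * δ⁻¹ * δ⁻¹ ≤ c₂ := by rw [hc₂]; linarith
    rw [h1]
    calc (K^2 * δ⁻¹ * δ⁻¹) * (Real.sqrt m * M⁻¹) ≤ c₂ * (Real.sqrt m * M⁻¹) :=
          mul_le_mul_of_nonneg_right h2 (by positivity)
      _ = c₂ * Real.sqrt m * M⁻¹ := by ring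
  -- pointwise values of φ
  have hφQu : ∀ x ∈ Qu, ‖φ x‖ = ‖cc‖ * ‖bQu‖⁻¹ := by
    intro x hx
    have hx1 : x ∉ Qh1 := Set.disjoint_left.mp hdisj hx
    rw [hφ]
    simp [Set.indicator_of_mem hx, Set.indicator_of_notMem hx1, norm_mul, norm_inv]
  have hφQh1 : ∀ x ∈ Qh1, ‖φ x‖ = ‖cc‖ * ‖bQh1‖⁻¹ := by
    intro x hx
    have hx1 : x ∉ Qu := Set.disjoint_right.mp hdisj hx
    rw [hφ]
    simp [Set.indicator_of_mem hx, Set.indicator_of_notMem hx1, norm_mul, norm_inv]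
  have hφ0 : ∀ x, x ∉ Qu → x ∉ Qh1 → φ x = 0 := by
    intro x hx1 hx2
    rw [hφ]
    simp [Set.indicator_of_notMem hx1, Set.indicator_of_notMem hx2]
  -- part (ii)
  have part2 : ∀ x : RN N,
      c₁ * Real.sqrt m * (Qu.indicator (fun _ => m⁻¹) x + Qh1.indicator (fun _ => M⁻¹) x)
        ≤ ‖φ x‖ ∧
      ‖φ x‖ ≤ c₂ * Real.sqrt m *
        (Qu.indicator (fun _ => m⁻¹) x + Qh1.indicator (fun _ => M⁻¹) x) := by
    intro x
    by_cases hx : x ∈ Qu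
    · have hx1 : x ∉ Qh1 := Set.disjoint_left.mp hdisj hx
      rw [hφQu x hx, Set.indicator_of_mem hx, Set.indicator_of_notMem hx1]
      constructor
      · calc c₁ * Real.sqrt m * (m⁻¹ + 0) = c₁ * Real.sqrt m * m⁻¹ := by ring
          _ ≤ ‖cc‖ * ‖bQu‖⁻¹ := hvU_l
      · calc ‖cc‖ * ‖bQu‖⁻¹ ≤ c₂ * Real.sqrt m * m⁻¹ := hvU_u
          _ = c₂ * Real.sqrt m * (m⁻¹ + 0) := by ring
    · by_cases hx2 : x ∈ Qh1
      · rw [hφQh1 x hx2, Set.indicator_of_mem hx2, Set.indicator_of_notMem hx]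
        constructor
        · calc c₁ * Real.sqrt m * (0 + M⁻¹) = c₁ * Real.sqrt m * M⁻¹ := by ring
            _ ≤ ‖cc‖ * ‖bQh1‖⁻¹ := hvH_l
        · calc ‖cc‖ * ‖bQh1‖⁻¹ ≤ c₂ * Real.sqrt m * M⁻¹ := hvH_u
            _ = c₂ * Real.sqrt m * (0 + M⁻¹) := by ring
      · rw [hφ0 x hx hx2, Set.indicator_of_notMem hx, Set.indicator_of_notMem hx2]
        simp
  -- part (i)
  have part1 : (∫ x, b x * φ x ∂μ) = 0 := by
    have hintQu : IntegrableOn b Qu μ := hbint.mono_set hQu_sub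
    have hintQh1 : IntegrableOn b Qh1 μ := hbint.mono_set hQh1_sub
    have hIu : Integrable (Qu.indicator b) μ := hintQu.integrable_indicator hQu_meas
    have hIh : Integrable (Qh1.indicator b) μ := hintQh1.integrable_indicator hQh1_meas
    have hfe : (fun x => b x * φ x)
        = fun x => (cc * bQu⁻¹) * Qu.indicator b x - (cc * bQh1⁻¹) * Qh1.indicator b x := by
      funext x
      rw [hφ]
      by_cases hx : x ∈ Qu
      · have hx1 : x ∉ Qh1 := Set.disjoint_left.mp hdisj hx
        simp only [Set.indicator_of_mem hx, Set.indicator_of_notMem hx1]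
        ring
      · by_cases hx2 : x ∈ Qh1
        · simp only [Set.indicator_of_mem hx2, Set.indicator_of_notMem hx]
          ring
        · simp only [Set.indicator_of_notMem hx, Set.indicator_of_notMem hx2]
          ring
    rw [hfe, integral_sub (hIu.const_mul _) (hIh.const_mul _), integral_const_mul,
      integral_const_mul, integral_indicator hQu_meas, integral_indicator hQh1_meas,
      ← hbQu, ← hbQh1]
    field_simp
    simp
  -- part (iii)
  have part3 : ∀ pp : ℝ≥0∞, 1 ≤ pp →
      ENNReal.ofReal (c₁ * m ^ ((1 / pp).toReal - (2 : ℝ)⁻¹)) ≤ eLpNorm φ pp μ ∧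
      eLpNorm φ pp μ ≤ ENNReal.ofReal (2 * c₂ * m ^ ((1 / pp).toReal - (2 : ℝ)⁻¹)) := by
    intro pp hpp1
    have hppne : pp ≠ 0 := (lt_of_lt_of_le zero_lt_one hpp1).ne'
    have hr : (1 / pp).toReal = 1 / pp.toReal := by
      rw [one_div, ENNReal.toReal_inv, one_div]
    have hr0 : (0:ℝ) ≤ 1 / pp.toReal := by positivity
    have hr1 : 1 / pp.toReal ≤ 1 := by
      rcases eq_or_ne pp ∞ with h | h
      · simp [h]
      · have h1 : 1 ≤ pp.toReal := by
          have := ENNReal.toReal_mono h hpp1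
          simpa using this
        rw [div_le_one (by linarith)]; linarith
    constructor
    · -- lower bound
      have hmono : eLpNorm (Qu.indicator (fun _ => (c₁ * Real.sqrt m * m⁻¹ : ℝ))) pp μ
          ≤ eLpNorm φ pp μ := by
        apply eLpNorm_mono
        intro x
        by_cases hx : x ∈ Qu
        · rw [Set.indicator_of_mem hx, Real.norm_of_nonneg (by positivity)]
          have h := (part2 x).1
          rw [Set.indicator_of_mem hx,
            Set.indicator_of_notMem (Set.disjoint_left.mp hdisj hx)] at h
          calc c₁ * Real.sqrt m * m⁻¹ = c₁ * Real.sqrt m * (m⁻¹ + 0) := by ring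
            _ ≤ ‖φ x‖ := h
        · rw [Set.indicator_of_notMem hx]
          simpa using norm_nonneg (φ x)
      rw [elp_ind μ hQu_meas hμQu.ne' hQufin (by positivity) hppne, ← hmdef] at hmono
      refine le_trans (le_of_eq ?_) hmono
      rw [hr]
      congr 1
      rw [← rpow_aux1 hm (1 / pp.toReal)]
      ring
    · -- upper bound
      have hmono : eLpNorm φ pp μ ≤ eLpNorm
          (Qu.indicator (fun _ => (c₂ * Real.sqrt m * m⁻¹ : ℝ))
            + Qh1.indicator (fun _ => (c₂ * Real.sqrt m * M⁻¹ : ℝ))) pp μ := by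
        apply eLpNorm_mono
        intro x
        simp only [Pi.add_apply]
        by_cases hx : x ∈ Qu
        · have hx1 : x ∉ Qh1 := Set.disjoint_left.mp hdisj hx
          rw [Set.indicator_of_mem hx, Set.indicator_of_notMem hx1, add_zero,
            Real.norm_of_nonneg (by positivity), hφQu x hx]
          exact hvU_u
        · by_cases hx2 : x ∈ Qh1
          · rw [Set.indicator_of_notMem hx, Set.indicator_of_mem hx2, zero_add,
              Real.norm_of_nonneg (by positivity), hφQh1 x hx2]
            exact hvH_u
          · rw [hφ0 x hx hx2, Set.indicator_of_notMem hx, Set.indicator_of_notMem hx2]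
            simp
      have hadd := eLpNorm_add_le (μ := μ) (p := pp)
        (f := Qu.indicator (fun _ => (c₂ * Real.sqrt m * m⁻¹ : ℝ)))
        (g := Qh1.indicator (fun _ => (c₂ * Real.sqrt m * M⁻¹ : ℝ)))
        (aestronglyMeasurable_const.indicator hQu_meas)
        (aestronglyMeasurable_const.indicator hQh1_meas) hpp1
      rw [elp_ind μ hQu_meas hμQu.ne' hQufin (by positivity) hppne,
        elp_ind μ hQh1_meas hμQh1_ne0 hQh1fin (by positivity) hppne, ← hmdef] at hadd
      have h1 : ENNReal.ofReal (c₂ * Real.sqrt m * m⁻¹ * m ^ (1 / pp.toReal))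
          = ENNReal.ofReal (c₂ * m ^ (1 / pp.toReal - 2⁻¹)) := by
        congr 1
        rw [← rpow_aux1 hm (1 / pp.toReal)]
        ring
      have h2 : ENNReal.ofReal (c₂ * Real.sqrt m * M⁻¹ * (μ Qh1).toReal ^ (1 / pp.toReal))
          ≤ ENNReal.ofReal (c₂ * m ^ (1 / pp.toReal - 2⁻¹)) := by
        apply ENNReal.ofReal_le_ofReal
        have hq : (μ Qh1).toReal ≤ M := ENNReal.toReal_mono hQfin (measure_mono hQh1_sub)
        have h3 : (μ Qh1).toReal ^ (1 / pp.toReal) ≤ M ^ (1 / pp.toReal) :=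
          Real.rpow_le_rpow ENNReal.toReal_nonneg hq hr0
        calc c₂ * Real.sqrt m * M⁻¹ * (μ Qh1).toReal ^ (1 / pp.toReal)
            ≤ c₂ * Real.sqrt m * M⁻¹ * M ^ (1 / pp.toReal) :=
              mul_le_mul_of_nonneg_left h3 (by positivity)
          _ = c₂ * (Real.sqrt m * (M⁻¹ * M ^ (1 / pp.toReal))) := by ring
          _ = c₂ * (Real.sqrt m * M ^ (1 / pp.toReal - 1)) := by rw [rpow_aux3 hM]
          _ ≤ c₂ * (Real.sqrt m * m ^ (1 / pp.toReal - 1)) := by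
              refine mul_le_mul_of_nonneg_left ?_ hc₂pos.le
              refine mul_le_mul_of_nonneg_left ?_ (Real.sqrt_nonneg m)
              exact Real.rpow_le_rpow_of_nonpos hm hmM (by linarith)
          _ = c₂ * m ^ (1 / pp.toReal - 2⁻¹) := by rw [rpow_aux2 hm]
      rw [hr]
      calc eLpNorm φ pp μ ≤ _ := hmono
        _ ≤ _ := hadd
        _ ≤ ENNReal.ofReal (c₂ * m ^ (1 / pp.toReal - 2⁻¹))
            + ENNReal.ofReal (c₂ * m ^ (1 / pp.toReal - 2⁻¹)) := add_le_add (le_of_eq h1) h2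
        _ = ENNReal.ofReal (2 * c₂ * m ^ (1 / pp.toReal - 2⁻¹)) := by
            rw [← ENNReal.ofReal_add (by positivity) (by positivity)]
            congr 1
            ring
  -- part (iv)
  have part4 : eLpNorm φ 1 μ * eLpNorm φ ∞ μ ≤ ENNReal.ofReal ((2 * c₂)^2) := by
    obtain ⟨-, h1u⟩ := part3 1 le_rfl
    obtain ⟨-, hiu⟩ := part3 ∞ le_top
    have e1 : ((1:ℝ≥0∞)/1).toReal = 1 := by simp
    have ei : ((1:ℝ≥0∞)/∞).toReal = 0 := by simp
    rw [e1] at h1u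
    rw [ei] at hiu
    calc eLpNorm φ 1 μ * eLpNorm φ ∞ μ
        ≤ ENNReal.ofReal (2 * c₂ * m ^ ((1:ℝ) - 2⁻¹))
            * ENNReal.ofReal (2 * c₂ * m ^ ((0:ℝ) - 2⁻¹)) := mul_le_mul' h1u hiu
      _ = ENNReal.ofReal ((2 * c₂ * m ^ ((1:ℝ) - 2⁻¹)) * (2 * c₂ * m ^ ((0:ℝ) - 2⁻¹))) :=
          (ENNReal.ofReal_mul (by positivity)).symm
      _ = ENNReal.ofReal ((2 * c₂)^2) := by
          congr 1
          rw [show (2 * c₂ * m ^ ((1:ℝ) - 2⁻¹)) * (2 * c₂ * m ^ ((0:ℝ) - 2⁻¹))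
              = (2 * c₂)^2 * (m ^ ((1:ℝ) - 2⁻¹) * m ^ ((0:ℝ) - 2⁻¹)) from by ring,
            ← Real.rpow_add hm]
          norm_num
  exact ⟨part1, part2, part3, part4⟩
end
end

section
/- Improved matrix coefficient bound for a good smaller cube. Let μ be a Borel measure on ℝ^N satisfying μ(B(x,r)) ≤ r^d for all balls, let K be a d-dimensional Calderón–Zygmund kernel with exponent α > 0, set γ := α/(2(α+d)), and let b₁, b₂ be measurable with ‖b₁‖_{L^∞(μ)} ≤ 1 and ‖b₂‖_{L^∞(μ)} ≤ 1. Let Q and R be axis-parallel cubes with ℓ(Q) ≤ ℓ(R), 0 < ℓ(Q) ≤ dist(Q,R), and dist(Q,R) ≥ (1/2) ℓ(Q)^γ ℓ(R)^{1−γ} (the quantitative consequence of Q being good relative to R). Let φ ∈ L¹(μ) be supported in Q with ∫ b₁ φ dμ = 0, and let ψ ∈ L¹(μ) be supported in R. Then |∬ ψ(x) b₂(x) K(x,y) b₁(y) φ(y) dμ(y) dμ(x)| ≤ C (ℓ(Q)^{α/2} ℓ(R)^{α/2} / D(Q,R)^{d+α}) ‖ψ‖_{L¹(μ)} ‖φ‖_{L¹(μ)},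 where D(Q,R) := ℓ(Q) + dist(Q,R) + ℓ(R) is the long distance and C depends only on N, d and α. -/
open MeasureTheory ENNReal

noncomputable section
set_option maxHeartbeats 1000000

/-- `μ(B(x,r)) ≤ r^d` for all balls. -/
def HasGrowth {N : ℕ} (μ : Measure (RN N)) (d : ℝ) : Prop :=
  ∀ (x : RN N) (r : ℝ), 0 < r → μ (Metric.ball x r) ≤ ENNReal.ofReal (r ^ d)

/-- A `d`-dimensional Calderón–Zygmund kernel with exponent `α`. -/
structure IsCZKernel {N : ℕ} (d α : ℝ) (K : RN N → RN N → ℂ) : Prop where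
  meas : Measurable (Function.uncurry K)
  bound : ∀ x y : RN N, x ≠ y → ‖K x y‖ ≤ dist x y ^ (-d)
  smooth : ∀ x x' y : RN N, 0 < dist x x' → 2 * dist x x' < dist x y →
    ‖K x y - K x' y‖ + ‖K y x - K y x'‖ ≤ dist x x' ^ α / dist x y ^ (d + α)


/-- The (Euclidean) distance between two sets. -/
def sDist {N : ℕ} (s t : Set (RN N)) : ℝ :=
  sInf {r | ∃ x ∈ s, ∃ y ∈ t, r = dist x y}

lemma rpow_half_mul {x y : ℝ} (hx : 0 ≤ x) (hxy : x ≤ y) {α : ℝ} (hα : 0 < α) :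
    x ^ α ≤ x ^ (α/2) * y ^ (α/2) := by
  have h1 : x ^ α = x ^ (α/2) * x ^ (α/2) := by
    rw [← Real.rpow_add' hx (by positivity)]
    congr 1; ring
  rw [h1]
  exact mul_le_mul_of_nonneg_left (Real.rpow_le_rpow hx hxy (by positivity))
    (Real.rpow_nonneg hx _)

lemma aux_bound (n d α lQ lR t X : ℝ) (hn : 1 ≤ n) (hd : 0 < d) (hα : 0 < α)
    (hlQ : 0 < lQ) (hlQR : lQ ≤ lR) (hlt : lQ ≤ t)
    (hgood : 1/2 * lQ ^ (α/(2*(α+d))) * lR ^ (1 - α/(2*(α+d))) ≤ t)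
    (hX : (t ≤ Real.sqrt n * lQ ∧ X ≤ 2 * t ^ (-d)) ∨
          X ≤ (Real.sqrt n * lQ) ^ α / t ^ (d+α)) :
    X ≤ (n ^ (α/2) * 6 ^ (d+α) + 2*(6*n)^(d+α)) *
        (lQ ^ (α/2) * lR ^ (α/2) / (lQ + t + lR) ^ (d+α)) := by
  have hn0 : (0:ℝ) < n := lt_of_lt_of_le one_pos hn
  have hlR : 0 < lR := lt_of_lt_of_le hlQ hlQR
  have ht0 : 0 < t := lt_of_lt_of_le hlQ hlt
  have hαd : 0 < α + d := by linarith
  have hk : 0 < d + α := by linarith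
  have hD0 : 0 < lQ + t + lR := by linarith
  have hDk : 0 < (lQ + t + lR) ^ (d+α) := Real.rpow_pos_of_pos hD0 _
  have hsn : 1 ≤ Real.sqrt n := by
    rw [show (1:ℝ) = Real.sqrt 1 by simp]
    exact Real.sqrt_le_sqrt hn
  set γ : ℝ := α/(2*(α+d)) with hγdef
  have hγk : γ * (d + α) = α / 2 := by
    rw [hγdef]; field_simp; ring
  have hγk' : (1 - γ) * (d + α) = d + α / 2 := by
    rw [hγdef]; field_simp; ring
  have hγpos : 0 < γ := by positivity
  have hγle : γ ≤ 1/2 := by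
    rw [hγdef, div_le_div_iff₀ (by linarith) (by norm_num)]
    linarith
  have hspos : (0:ℝ) < 1 - γ := by linarith
  have hfrac0 : 0 ≤ lQ ^ (α/2) * lR ^ (α/2) / (lQ + t + lR) ^ (d+α) := by positivity
  -- it suffices to bound X by one of the two summands times the fraction
  suffices h : X ≤ (2*(6*n)^(d+α)) * (lQ ^ (α/2) * lR ^ (α/2) / (lQ + t + lR) ^ (d+α)) ∨
      X ≤ (n ^ (α/2) * 6 ^ (d+α)) * (lQ ^ (α/2) * lR ^ (α/2) / (lQ + t + lR) ^ (d+α)) by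
    have h1 : 0 ≤ (n ^ (α/2) * 6 ^ (d+α)) * (lQ ^ (α/2) * lR ^ (α/2) / (lQ + t + lR) ^ (d+α)) := by
      positivity
    have h2 : 0 ≤ (2*(6*n)^(d+α)) * (lQ ^ (α/2) * lR ^ (α/2) / (lQ + t + lR) ^ (d+α)) := by
      positivity
    rw [add_mul]
    rcases h with h | h <;> linarith
  rcases hX with ⟨hcase, hXle⟩ | hXle
  · -- size case : t ≤ √n * lQ
    left
    -- lR ≤ 4 n lQ
    have e1 : lQ = lQ ^ γ * lQ ^ (1-γ) := by
      rw [← Real.rpow_add hlQ, show γ + (1-γ) = 1 by ring, Real.rpow_one]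
    have hp : (0:ℝ) < lQ ^ γ := Real.rpow_pos_of_pos hlQ _
    have h4 : 1/2 * lQ ^ γ * lR ^ (1-γ) ≤ Real.sqrt n * (lQ ^ γ * lQ ^ (1-γ)) := by
      rw [← e1]; exact hgood.trans hcase
    have e2 : lR ^ (1-γ) ≤ 2 * Real.sqrt n * lQ ^ (1-γ) := by
      have h5 : lQ ^ γ * lR ^ (1-γ) ≤ lQ ^ γ * (2 * Real.sqrt n * lQ ^ (1-γ)) := by
        nlinarith
      exact (mul_le_mul_iff_right₀ hp).1 h5
    have e3 : lR = (lR ^ (1-γ)) ^ (1-γ)⁻¹ := by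
      rw [← Real.rpow_mul hlR.le, mul_inv_cancel₀ hspos.ne', Real.rpow_one]
    have e4 : lR ≤ (2*Real.sqrt n) ^ (1-γ)⁻¹ * lQ := by
      calc lR = (lR ^ (1-γ)) ^ (1-γ)⁻¹ := e3
        _ ≤ (2*Real.sqrt n*lQ^(1-γ)) ^ (1-γ)⁻¹ :=
            Real.rpow_le_rpow (Real.rpow_nonneg hlR.le _) e2 (by positivity)
        _ = (2*Real.sqrt n) ^ (1-γ)⁻¹ * (lQ^(1-γ)) ^ (1-γ)⁻¹ :=
            Real.mul_rpow (by positivity) (Real.rpow_nonneg hlQ.le _)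
        _ = (2*Real.sqrt n) ^ (1-γ)⁻¹ * lQ := by
            rw [← Real.rpow_mul hlQ.le, mul_inv_cancel₀ hspos.ne', Real.rpow_one]
    have e5 : (2*Real.sqrt n) ^ (1-γ)⁻¹ ≤ 4 * n := by
      have h1 : (1:ℝ) ≤ 2 * Real.sqrt n := by nlinarith
      have h2 : (1-γ)⁻¹ ≤ 2 := by
        rw [inv_eq_one_div, div_le_iff₀ hspos]; linarith
      calc (2*Real.sqrt n) ^ (1-γ)⁻¹ ≤ (2*Real.sqrt n) ^ (2:ℝ) :=
            Real.rpow_le_rpow_of_exponent_le h1 h2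
        _ = 4 * n := by
            rw [Real.rpow_two, sq]
            have h := Real.mul_self_sqrt (le_of_lt hn0)
            linear_combination 4 * h
    have hsn' : Real.sqrt n ≤ n := by
      nlinarith [Real.sq_sqrt (le_of_lt hn0), Real.sqrt_nonneg n]
    have hDle : lQ + t + lR ≤ 6 * n * lQ := by
      have h2 : t ≤ n * lQ := hcase.trans (by nlinarith)
      have h3 : lR ≤ 4*n*lQ := e4.trans (mul_le_mul_of_nonneg_right e5 hlQ.le)
      nlinarith
    have hDpow : (lQ+t+lR)^(d+α) ≤ (6*n)^(d+α) * lQ^(d+α) := by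
      rw [← Real.mul_rpow (by positivity) hlQ.le]
      exact Real.rpow_le_rpow hD0.le hDle hk.le
    have hstep : lQ ^ (-d) * lQ ^ (d+α) = lQ ^ α := by
      rw [← Real.rpow_add hlQ]; congr 1; ring
    have hkey : 2*lQ^(-d) * (lQ+t+lR)^(d+α) ≤ 2*(6*n)^(d+α) * (lQ^(α/2)*lR^(α/2)) := by
      calc 2*lQ^(-d) * (lQ+t+lR)^(d+α)
          ≤ 2*lQ^(-d) * ((6*n)^(d+α) * lQ^(d+α)) := by
            apply mul_le_mul_of_nonneg_left hDpow (by positivity)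
        _ = 2*(6*n)^(d+α) * (lQ^(-d) * lQ^(d+α)) := by ring
        _ = 2*(6*n)^(d+α) * lQ^α := by rw [hstep]
        _ ≤ 2*(6*n)^(d+α) * (lQ^(α/2)*lR^(α/2)) := by
            apply mul_le_mul_of_nonneg_left (rpow_half_mul hlQ.le hlQR hα) (by positivity)
    have hA1 : t^(-d) ≤ lQ^(-d) := Real.rpow_le_rpow_of_nonpos hlQ hlt (by linarith)
    have hfinal : 2 * lQ ^ (-d) ≤ (2*(6*n)^(d+α)) * (lQ^(α/2)*lR^(α/2)/(lQ+t+lR)^(d+α)) := by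
      rw [← mul_div_assoc, le_div_iff₀ hDk]; exact hkey
    calc X ≤ 2 * t^(-d) := hXle
      _ ≤ 2 * lQ^(-d) := by linarith
      _ ≤ _ := hfinal
  · -- smoothness case
    right
    have hnum : (Real.sqrt n * lQ) ^ α = n^(α/2) * lQ^α := by
      rw [Real.mul_rpow (Real.sqrt_nonneg n) hlQ.le, Real.sqrt_eq_rpow,
        ← Real.rpow_mul hn0.le, show 1/2*α = α/2 by ring]
    have htk : (0:ℝ) < t ^ (d+α) := Real.rpow_pos_of_pos ht0 _
    have hXle' : X ≤ n^(α/2) * lQ^α / t^(d+α) := by rw [← hnum]; exact hXle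
    rcases le_total lR t with hc | hc
    · -- t ≥ lR
      have hDle : lQ + t + lR ≤ 3 * t := by linarith
      have hDpow : (lQ+t+lR)^(d+α) ≤ 3^(d+α) * t^(d+α) := by
        rw [← Real.mul_rpow (by norm_num) ht0.le]
        exact Real.rpow_le_rpow hD0.le hDle hk.le
      have h36 : (3:ℝ)^(d+α) ≤ 6^(d+α) := Real.rpow_le_rpow (by norm_num) (by norm_num) hk.le
      have hkey : (n^(α/2) * lQ^α / t^(d+α)) * (lQ+t+lR)^(d+α)
          ≤ (n^(α/2) * 6^(d+α)) * (lQ^(α/2)*lR^(α/2)) := by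
        calc (n^(α/2) * lQ^α / t^(d+α)) * (lQ+t+lR)^(d+α)
            ≤ (n^(α/2) * lQ^α / t^(d+α)) * (3^(d+α) * t^(d+α)) := by
              apply mul_le_mul_of_nonneg_left hDpow (by positivity)
          _ = n^(α/2) * 3^(d+α) * lQ^α := by field_simp
          _ ≤ n^(α/2) * 3^(d+α) * (lQ^(α/2)*lR^(α/2)) :=
              mul_le_mul_of_nonneg_left (rpow_half_mul hlQ.le hlQR hα) (by positivity)
          _ ≤ (n^(α/2) * 6^(d+α)) * (lQ^(α/2)*lR^(α/2)) := by
              apply mul_le_mul_of_nonneg_right _ (by positivity)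
              exact mul_le_mul_of_nonneg_left h36 (by positivity)
      have hfinal : n^(α/2)*lQ^α/t^(d+α)
          ≤ (n^(α/2)*6^(d+α)) * (lQ^(α/2)*lR^(α/2)/(lQ+t+lR)^(d+α)) := by
        rw [← mul_div_assoc, le_div_iff₀ hDk]; exact hkey
      exact hXle'.trans hfinal
    · -- t ≤ lR, use goodness
      have hDle : lQ + t + lR ≤ 3 * lR := by linarith
      have hDpow : (lQ+t+lR)^(d+α) ≤ 3^(d+α) * lR^(d+α) := by
        rw [← Real.mul_rpow (by norm_num) hlR.le]
        exact Real.rpow_le_rpow hD0.le hDle hk.le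
      have hTk : (2^(d+α))⁻¹ * lQ^(α/2) * lR^(d+α/2) ≤ t^(d+α) := by
        have e1 : (1/2 * lQ^γ * lR^(1-γ))^(d+α) = (2^(d+α))⁻¹ * lQ^(α/2) * lR^(d+α/2) := by
          rw [Real.mul_rpow (by positivity) (Real.rpow_nonneg hlR.le _),
              Real.mul_rpow (by norm_num) (Real.rpow_nonneg hlQ.le _),
              ← Real.rpow_mul hlQ.le, ← Real.rpow_mul hlR.le, hγk, hγk',
              one_div, Real.inv_rpow (by norm_num)]
        rw [← e1]
        exact Real.rpow_le_rpow (by positivity) hgood hk.le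
      have h2k : (0:ℝ) < (2:ℝ)^(d+α) := Real.rpow_pos_of_pos two_pos _
      have hT0 : (0:ℝ) < ((2:ℝ)^(d+α))⁻¹ * lQ^(α/2) * lR^(d+α/2) := by positivity
      have hlRsplit : lR^(d+α) = lR^(α/2) * lR^(d+α/2) := by
        rw [← Real.rpow_add hlR]; congr 1; ring
      have hlQsplit : lQ^α = lQ^(α/2) * lQ^(α/2) := by
        rw [← Real.rpow_add hlQ]; congr 1; ring
      have h6k : (6:ℝ)^(d+α) = 2^(d+α) * 3^(d+α) := by
        rw [← Real.mul_rpow (by norm_num) (by norm_num)]; norm_num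
      have hkey : (n^(α/2) * lQ^α / t^(d+α)) * (lQ+t+lR)^(d+α)
          ≤ (n^(α/2) * 6^(d+α)) * (lQ^(α/2)*lR^(α/2)) := by
        calc (n^(α/2) * lQ^α / t^(d+α)) * (lQ+t+lR)^(d+α)
            ≤ (n^(α/2) * lQ^α / t^(d+α)) * (3^(d+α) * lR^(d+α)) := by
              apply mul_le_mul_of_nonneg_left hDpow (by positivity)
          _ ≤ (n^(α/2) * lQ^α / (((2:ℝ)^(d+α))⁻¹ * lQ^(α/2) * lR^(d+α/2))) *
                (3^(d+α) * lR^(d+α)) := by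
              apply mul_le_mul_of_nonneg_right _ (by positivity)
              exact div_le_div_of_nonneg_left (by positivity) hT0 hTk
          _ = (n^(α/2) * 6^(d+α)) * (lQ^(α/2)*lR^(α/2)) := by
              rw [h6k, hlRsplit, hlQsplit]
              field_simp
      have hfinal : n^(α/2)*lQ^α/t^(d+α)
          ≤ (n^(α/2)*6^(d+α)) * (lQ^(α/2)*lR^(α/2)/(lQ+t+lR)^(d+α)) := by
        rw [← mul_div_assoc, le_div_iff₀ hDk]; exact hkey
      exact hXle'.trans hfinal

lemma mem_cube_self {N : ℕ} (c : RN N) {l : ℝ} (hl : 0 < l) : c ∈ cube c l :=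
  fun i => ⟨by linarith, by linarith⟩

lemma dist_le_of_mem_cube {N : ℕ} {c : RN N} {l : ℝ} (hl : 0 ≤ l) {y : RN N}
    (hy : y ∈ cube c l) : dist y c ≤ Real.sqrt N * l / 2 := by
  rw [EuclideanSpace.dist_eq]
  have h : ∀ i, dist (y i) (c i) ^ 2 ≤ (l/2)^2 := by
    intro i
    have h1 := (hy i).1; have h2 := (hy i).2
    rw [Real.dist_eq]
    have h3 : |y i - c i| ≤ l/2 := abs_le.2 ⟨by linarith, by linarith⟩
    nlinarith [abs_nonneg (y i - c i)]
  calc Real.sqrt (∑ i, dist (y i) (c i) ^ 2) ≤ Real.sqrt (∑ _i : Fin N, (l/2)^2) :=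
        Real.sqrt_le_sqrt (Finset.sum_le_sum (fun i _ => h i))
    _ = Real.sqrt ((N : ℝ) * (l/2)^2) := by
        rw [Finset.sum_const, Finset.card_univ, Fintype.card_fin, nsmul_eq_mul]
    _ = Real.sqrt N * (l/2) := by
        rw [Real.sqrt_mul (Nat.cast_nonneg N), Real.sqrt_sq (by linarith)]
    _ = Real.sqrt N * l / 2 := by ring

lemma sDist_le {N : ℕ} {s t : Set (RN N)} {x y : RN N} (hx : x ∈ s) (hy : y ∈ t) :
    sDist s t ≤ dist x y := by
  apply csInf_le
  · exact ⟨0, fun r ⟨a, _, b, _, hr⟩ => hr ▸ dist_nonneg⟩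
  · exact ⟨x, hx, y, hy, rfl⟩

/-- **Improved matrix coefficient bound for a good smaller cube** (NTV Lemma 6.4),
with the long distance `D(Q,R) = ℓ(Q) + dist(Q,R) + ℓ(R)` and `γ = α/(2(α+d))`. -/
theorem matrix_coefficient_bound_good_cube
    (N : ℕ) (hN : 0 < N) (d α : ℝ) (hd0 : 0 < d) (hdN : d ≤ N) (hα : 0 < α) :
    ∃ C : ℝ, ∀ (μ : Measure (RN N)) (K : RN N → RN N → ℂ) (b₁ b₂ : RN N → ℂ),
      HasGrowth μ d → IsCZKernel d α K →
      Measurable b₁ → (∀ᵐ x ∂μ, ‖b₁ x‖ ≤ 1) →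
      Measurable b₂ → (∀ᵐ x ∂μ, ‖b₂ x‖ ≤ 1) →
      ∀ (cQ cR : RN N) (lQ lR : ℝ), 0 < lQ → lQ ≤ lR →
        lQ ≤ sDist (cube cQ lQ) (cube cR lR) →
        (1 / 2) * lQ ^ (α / (2 * (α + d))) * lR ^ (1 - α / (2 * (α + d))) ≤
          sDist (cube cQ lQ) (cube cR lR) →
      ∀ φ ψ : RN N → ℂ,
        Integrable φ μ → (∀ x, x ∉ cube cQ lQ → φ x = 0) →
        (∫ x, b₁ x * φ x ∂μ) = 0 →
        Integrable ψ μ → (∀ x, x ∉ cube cR lR → ψ x = 0) →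
        ‖∫ x, ψ x * b₂ x * ∫ y, K x y * b₁ y * φ y ∂μ ∂μ‖ ≤
          C * (lQ ^ (α / 2) * lR ^ (α / 2) /
              (lQ + sDist (cube cQ lQ) (cube cR lR) + lR) ^ (d + α)) *
            (∫ x, ‖ψ x‖ ∂μ) * (∫ x, ‖φ x‖ ∂μ) := by
  refine ⟨(N:ℝ)^(α/2) * 6^(d+α) + 2*(6*(N:ℝ))^(d+α), ?_⟩
  intro μ K b₁ b₂ hμ hK hb₁m hb₁ hb₂m hb₂ cQ cR lQ lR hlQ hlQR hlt hgood φ ψ hφi hφs hφ0 hψi hψs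
  have hN1 : (1:ℝ) ≤ N := by exact_mod_cast hN
  set t := sDist (cube cQ lQ) (cube cR lR) with ht
  have hlR : 0 < lR := lt_of_lt_of_le hlQ hlQR
  have ht0 : 0 < t := lt_of_lt_of_le hlQ hlt
  set C₀ : ℝ := (N:ℝ)^(α/2) * 6^(d+α) + 2*(6*(N:ℝ))^(d+α) with hC₀
  set B : ℝ := C₀ * (lQ^(α/2)*lR^(α/2)/(lQ + t + lR)^(d+α)) with hB
  have hD0 : 0 < lQ + t + lR := by linarith
  have hBnn : 0 ≤ B := by
    rw [hB, hC₀]; positivity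
  -- kernel difference bound
  have hker : ∀ x ∈ cube cR lR, ∀ y ∈ cube cQ lQ, ‖K x y - K x cQ‖ ≤ B := by
    intro x hx y hy
    have hdyx : t ≤ dist y x := sDist_le hy hx
    have hdcx : t ≤ dist cQ x := sDist_le (mem_cube_self cQ hlQ) hx
    have hycQ : dist y cQ ≤ Real.sqrt N * lQ / 2 := dist_le_of_mem_cube hlQ.le hy
    rcases le_or_gt t (Real.sqrt N * lQ) with hcase | hcase
    · -- size estimate
      have hyx0 : (0:ℝ) < dist y x := lt_of_lt_of_le ht0 hdyx
      have hcx0 : (0:ℝ) < dist cQ x := lt_of_lt_of_le ht0 hdcx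
      have hxy : x ≠ y := by
        intro h; subst h; simp at hyx0
      have hxcQ : x ≠ cQ := by
        intro h; subst h; simp at hcx0
      have h1 : ‖K x y‖ ≤ dist x y ^ (-d) := hK.bound x y hxy
      have h2 : ‖K x cQ‖ ≤ dist x cQ ^ (-d) := hK.bound x cQ hxcQ
      have h3 : dist x y ^ (-d) ≤ t ^ (-d) :=
        Real.rpow_le_rpow_of_nonpos ht0 (by rw [dist_comm]; exact hdyx) (by linarith)
      have h4 : dist x cQ ^ (-d) ≤ t ^ (-d) :=
        Real.rpow_le_rpow_of_nonpos ht0 (by rw [dist_comm]; exact hdcx) (by linarith)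
      have h5 : ‖K x y - K x cQ‖ ≤ 2 * t ^ (-d) := by
        calc ‖K x y - K x cQ‖ ≤ ‖K x y‖ + ‖K x cQ‖ := norm_sub_le _ _
          _ ≤ 2 * t ^ (-d) := by linarith
      rw [hB, hC₀]
      exact aux_bound N d α lQ lR t _ hN1 hd0 hα hlQ hlQR hlt hgood (Or.inl ⟨hcase, h5⟩)
    · -- smoothness estimate
      by_cases hy0 : y = cQ
      · rw [hy0]; simpa using hBnn
      · have hpos : 0 < dist y cQ := dist_pos.2 hy0
        have h2 : 2 * dist y cQ < dist y x := by
          have h2a : 2 * dist y cQ ≤ Real.sqrt N * lQ := by linarith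
          have h2b : Real.sqrt N * lQ < dist y x := lt_of_lt_of_le hcase hdyx
          linarith
        have hs := hK.smooth y cQ x hpos h2
        have h6 : ‖K x y - K x cQ‖ ≤ dist y cQ ^ α / dist y x ^ (d+α) := by
          have := norm_nonneg (K y x - K cQ x); linarith
        have h7 : dist y cQ ^ α ≤ (Real.sqrt N * lQ) ^ α := by
          apply Real.rpow_le_rpow dist_nonneg _ hα.le
          nlinarith [Real.sqrt_nonneg (N:ℝ)]
        have h8 : t ^ (d+α) ≤ dist y x ^ (d+α) :=
          Real.rpow_le_rpow ht0.le hdyx (by linarith)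
        have h9 : dist y cQ ^ α / dist y x ^ (d+α) ≤ (Real.sqrt N * lQ)^α / t^(d+α) :=
          div_le_div₀ (by positivity) h7 (Real.rpow_pos_of_pos ht0 _) h8
        rw [hB, hC₀]
        exact aux_bound N d α lQ lR t _ hN1 hd0 hα hlQ hlQR hlt hgood (Or.inr (h6.trans h9))
  -- inner integral bound
  have hinner : ∀ x ∈ cube cR lR,
      ‖∫ y, K x y * b₁ y * φ y ∂μ‖ ≤ B * ∫ y, ‖φ y‖ ∂μ := by
    intro x hx
    have hKx : Measurable fun y => K x y := hK.meas.comp measurable_prodMk_left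
    have hb₁φ : Integrable (fun y => b₁ y * φ y) μ :=
      hφi.bdd_mul hb₁m.aestronglyMeasurable hb₁
    have hbound : ∀ᵐ y ∂μ, ‖(K x y - K x cQ) * (b₁ y * φ y)‖ ≤ B * ‖φ y‖ := by
      filter_upwards [hb₁] with y hy1
      by_cases hy : y ∈ cube cQ lQ
      · rw [norm_mul, norm_mul]
        calc ‖K x y - K x cQ‖ * (‖b₁ y‖ * ‖φ y‖) ≤ B * (1 * ‖φ y‖) := by
              apply mul_le_mul (hker x hx y hy) ?_ (by positivity) hBnn
              exact mul_le_mul_of_nonneg_right hy1 (norm_nonneg _)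
          _ = B * ‖φ y‖ := by ring
      · rw [hφs y hy]; simp
    have hmeas : AEStronglyMeasurable (fun y => (K x y - K x cQ) * (b₁ y * φ y)) μ :=
      ((hKx.sub measurable_const).aestronglyMeasurable.mul
        (hb₁m.aestronglyMeasurable.mul hφi.1))
    have hdiff : Integrable (fun y => (K x y - K x cQ) * (b₁ y * φ y)) μ :=
      Integrable.mono' ((hφi.norm).const_mul B) hmeas hbound
    have heq : ∫ y, K x y * b₁ y * φ y ∂μ
        = ∫ y, (K x y - K x cQ) * (b₁ y * φ y) ∂μ := by
      have e : (fun y => K x y * b₁ y * φ y)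
          = fun y => (K x y - K x cQ) * (b₁ y * φ y) + K x cQ * (b₁ y * φ y) :=
        funext fun y => by ring
      rw [e, integral_add hdiff (hb₁φ.const_mul _), integral_const_mul]
      have e2 : ∫ y, b₁ y * φ y ∂μ = 0 := hφ0
      rw [e2, mul_zero, add_zero]
    rw [heq]
    calc ‖∫ y, (K x y - K x cQ) * (b₁ y * φ y) ∂μ‖ ≤ ∫ y, B * ‖φ y‖ ∂μ :=
        norm_integral_le_of_norm_le ((hφi.norm).const_mul B) hbound
      _ = B * ∫ y, ‖φ y‖ ∂μ := integral_const_mul B _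
  -- outer integral
  have houter : ∀ᵐ x ∂μ, ‖ψ x * b₂ x * ∫ y, K x y * b₁ y * φ y ∂μ‖ ≤
      ‖ψ x‖ * (B * ∫ y, ‖φ y‖ ∂μ) := by
    have hφn : 0 ≤ ∫ y, ‖φ y‖ ∂μ := integral_nonneg fun _ => norm_nonneg _
    filter_upwards [hb₂] with x hx2
    by_cases hx : x ∈ cube cR lR
    · rw [norm_mul, norm_mul]
      calc ‖ψ x‖ * ‖b₂ x‖ * ‖∫ y, K x y * b₁ y * φ y ∂μ‖
          ≤ ‖ψ x‖ * 1 * (B * ∫ y, ‖φ y‖ ∂μ) := by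
            apply mul_le_mul _ (hinner x hx) (norm_nonneg _) (by positivity)
            exact mul_le_mul_of_nonneg_left hx2 (norm_nonneg _)
        _ = ‖ψ x‖ * (B * ∫ y, ‖φ y‖ ∂μ) := by ring
    · rw [hψs x hx]; simp
  calc ‖∫ x, ψ x * b₂ x * ∫ y, K x y * b₁ y * φ y ∂μ ∂μ‖
      ≤ ∫ x, ‖ψ x‖ * (B * ∫ y, ‖φ y‖ ∂μ) ∂μ :=
        norm_integral_le_of_norm_le ((hψi.norm).mul_const _) houter
    _ = (∫ x, ‖ψ x‖ ∂μ) * (B * ∫ y, ‖φ y‖ ∂μ) := integral_mul_const _ _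
    _ = C₀ * (lQ^(α/2)*lR^(α/2)/(lQ + t + lR)^(d+α)) * (∫ x, ‖ψ x‖ ∂μ) *
          (∫ x, ‖φ x‖ ∂μ) := by rw [hB]; ring
end
end
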